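/- The map Ψ : L²(𝕋ⁿ) → L²(𝕋ⁿ) defined by (Ψf)(ζ) = J(ζ)·f(τ(ζ)), where τ(ζ) = (ζ₁ζ₂⋯ζₙ, ζ₂ζ₃⋯ζₙ, …, ζ_{n−1}ζₙ, ζₙ) and J(ζ) = ∏_{j=2}^{n} ζ_j^{j−1}, is a unitary operator on L²(𝕋ⁿ) whose inverse is (Ψ⁻¹f)(ζ) = (ζ₂⋯ζₙ)^{−1}·f(σ(ζ)) with σ(ζ) = (ζ₁/ζ₂, ζ₂/ζ₃, …, ζ_{n−1}/ζₙ, ζₙ); moreover Ψ maps H²(∂_d△ₙ) onto H²(∂_d𝔻ⁿ). -/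

import Mathlib

open MeasureTheory Filter Topology ComplexConjugate

noncomputable section

instance fact_one_pos : Fact ((0:ℝ) < 1) := ⟨one_pos⟩

abbrev Torus (n : ℕ) := Fin n → AddCircle (1 : ℝ)

abbrev L2T (n : ℕ) := Lp ℂ 2 (volume : Measure (Torus n))

abbrev LinfT (n : ℕ) := Lp ℂ ⊤ (volume : Measure (Torus n))

def char {n : ℕ} (α : Fin n → ℤ) : Torus n → ℂ := fun x => ∏ j, fourier (α j) (x j)

lemma char_continuous {n : ℕ} (α : Fin n → ℤ) : Continuous (char α) :=
  continuous_finsetProd _ fun j _ => (fourier (α j)).continuous.comp (continuous_apply j)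

lemma char_memLp {n : ℕ} (α : Fin n → ℤ) (p : ENNReal) :
    MemLp (char α) p (volume : Measure (Torus n)) := by
  refine (memLp_top_of_bound ((char_continuous α).aestronglyMeasurable) 1 ?_).mono_exponent le_top
  filter_upwards with x
  simp only [char, norm_prod]
  calc ∏ j, ‖fourier (α j) (x j)‖
      = ∏ j : Fin n, (1:ℝ) := by
        refine Finset.prod_congr rfl fun j _ => ?_
        rw [fourier_apply]; exact Circle.norm_coe _
    _ ≤ 1 := by simp

def charL2 {n : ℕ} (α : Fin n → ℤ) : L2T n := (char_memLp α 2).toLp (char α)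

def hardyT (n : ℕ) : Submodule ℂ (L2T n) :=
  (Submodule.span ℂ
    (charL2 '' {α : Fin n → ℤ | ∀ k : Fin n, 0 ≤ (∑ j ∈ Finset.Iic k, α j) + (k.val : ℤ)})).topologicalClosure

def hardyD (n : ℕ) : Submodule ℂ (L2T n) :=
  (Submodule.span ℂ (charL2 '' {α : Fin n → ℤ | ∀ j, 0 ≤ α j})).topologicalClosure

instance hardyT.completeSpace (n : ℕ) : CompleteSpace (hardyT n) :=
  (Submodule.isClosed_topologicalClosure _).completeSpace_coe

instance hardyD.completeSpace (n : ℕ) : CompleteSpace (hardyD n) :=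
  (Submodule.isClosed_topologicalClosure _).completeSpace_coe

def IsToeplitzOn {n : ℕ} (K : Submodule ℂ (L2T n)) (φ : Torus n → ℂ) (T : K →L[ℂ] K) : Prop :=
  ∀ f g : K,
    (inner ℂ ((g : L2T n)) ((T f : L2T n)) : ℂ) =
      ∫ x, conj ((g : L2T n) x) * (φ x * (f : L2T n) x) ∂volume

def IsCoordMult {n : ℕ} (j : Fin n) (M : hardyT n →L[ℂ] hardyT n) : Prop :=
  ∀ f : hardyT n,
    ((M f : L2T n) : Torus n → ℂ) =ᵐ[volume]
      fun x => fourier 1 (x j) * ((f : L2T n) : Torus n → ℂ) x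

def IsHankelT {n : ℕ} (φ : Torus n → ℂ) (H : hardyT n →L[ℂ] L2T n) : Prop :=
  (∀ f : hardyT n, H f ∈ (hardyT n)ᗮ) ∧
    ∀ f : hardyT n, ∀ g : L2T n, g ∈ (hardyT n)ᗮ →
      (inner ℂ g (H f) : ℂ) = ∫ x, conj (g x) * (φ x * (f : L2T n) x) ∂volume

def IsAnalyticSymbolF {n : ℕ} (φ : Torus n → ℂ) : Prop :=
  ∀ α : Fin n → ℤ, (¬ ∀ k : Fin n, 0 ≤ ∑ j ∈ Finset.Iic k, α j) →
    ∫ x, φ x * char (-α) x ∂(volume : Measure (Torus n)) = 0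

def IsInnerSymbolF {n : ℕ} (φ : Torus n → ℂ) : Prop :=
  IsAnalyticSymbolF φ ∧ ∀ᵐ x ∂(volume : Measure (Torus n)), ‖φ x‖ = 1

def tauMap {n : ℕ} (x : Torus n) : Torus n := fun j => ∑ k ∈ Finset.Ici j, x k

def sigmaMap {n : ℕ} (x : Torus n) : Torus n :=
  fun j => if h : (j : ℕ) + 1 < n then x j - x ⟨(j : ℕ) + 1, h⟩ else x j

def jacF {n : ℕ} (x : Torus n) : ℂ := ∏ j : Fin n, fourier (j.val : ℤ) (x j)

def jacInvF {n : ℕ} (x : Torus n) : ℂ :=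
  ∏ j : Fin n, fourier (if j.val = 0 then (0 : ℤ) else -1) (x j)

namespace Aux7

variable {n : ℕ}

lemma fourier_add_arg (m : ℤ) (x y : AddCircle (1:ℝ)) :
    (fourier m (x + y) : ℂ) = fourier m x * fourier m y := by
  rw [fourier_apply, fourier_apply, fourier_apply, smul_add, AddCircle.toCircle_add]
  simp

lemma fourier_sum_arg (m : ℤ) {ι : Type*} (s : Finset ι) (f : ι → AddCircle (1:ℝ)) :
    (fourier m (∑ i ∈ s, f i) : ℂ) = ∏ i ∈ s, (fourier m (f i) : ℂ) := by
  induction s using Finset.cons_induction with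
  | empty => simp
  | cons a s ha ih => rw [Finset.sum_cons, Finset.prod_cons, fourier_add_arg, ih]

lemma fourier_sum_idx (x : AddCircle (1:ℝ)) {ι : Type*} (s : Finset ι) (g : ι → ℤ) :
    (fourier (∑ i ∈ s, g i) x : ℂ) = ∏ i ∈ s, (fourier (g i) x : ℂ) := by
  induction s using Finset.cons_induction with
  | empty => simp
  | cons a s ha ih => rw [Finset.sum_cons, Finset.prod_cons, fourier_add, ih]

lemma char_mul (α β : Fin n → ℤ) (x : Torus n) :
    char α x * char β x = char (α + β) x := by
  simp only [char, ← Finset.prod_mul_distrib, Pi.add_apply]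
  exact Finset.prod_congr rfl fun j _ => (fourier_add (T := 1)).symm

lemma char_zero_eq (x : Torus n) : char (0 : Fin n → ℤ) x = 1 := by
  simp [char]

lemma char_norm_one (α : Fin n → ℤ) (x : Torus n) : ‖char α x‖ = 1 := by
  simp only [char, norm_prod]
  calc ∏ j, ‖fourier (α j) (x j)‖
      = ∏ j : Fin n, (1:ℝ) := by
        refine Finset.prod_congr rfl fun j _ => ?_
        rw [fourier_apply]; exact Circle.norm_coe _
    _ = 1 := by simp

lemma char_comp_tau (α : Fin n → ℤ) (x : Torus n) :
    char α (tauMap x) = char (fun k => ∑ j ∈ Finset.Iic k, α j) x := by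
  unfold char tauMap
  calc ∏ j, (fourier (α j) (∑ k ∈ Finset.Ici j, x k) : ℂ)
      = ∏ j, ∏ k ∈ Finset.Ici j, (fourier (α j) (x k) : ℂ) :=
        Finset.prod_congr rfl fun j _ => fourier_sum_arg _ _ _
    _ = ∏ k, ∏ j ∈ Finset.Iic k, (fourier (α j) (x k) : ℂ) :=
        Finset.prod_comm' (by intro j k; simp [Finset.mem_Ici, Finset.mem_Iic, and_comm])
    _ = ∏ k, (fourier (∑ j ∈ Finset.Iic k, α j) (x k) : ℂ) :=
        Finset.prod_congr rfl fun k _ => (fourier_sum_idx _ _ _).symm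

lemma sigma_tau (x : Torus n) : sigmaMap (tauMap x) = x := by
  funext j
  by_cases h : (j : ℕ) + 1 < n
  · have hins : Finset.Ici j = insert j (Finset.Ici (⟨(j:ℕ)+1, h⟩ : Fin n)) := by
      ext k
      simp only [Finset.mem_Ici, Finset.mem_insert, Fin.le_def]
      constructor
      · intro hk; rcases eq_or_lt_of_le hk with h1 | h1
        · left; exact (Fin.ext h1.symm)
        · right; omega
      · rintro (rfl | hk) <;> omega
    have hnot : j ∉ Finset.Ici (⟨(j:ℕ)+1, h⟩ : Fin n) := by
      simp [Finset.mem_Ici, Fin.le_def]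
    simp only [sigmaMap, dif_pos h, tauMap, hins, Finset.sum_insert hnot, add_sub_cancel_right]
  · have hsingle : Finset.Ici j = {j} := by
      ext k
      simp only [Finset.mem_Ici, Finset.mem_singleton, Fin.le_def]
      constructor
      · intro hk; apply Fin.ext; have := k.isLt; omega
      · rintro rfl; exact le_refl _
    simp only [sigmaMap, dif_neg h, tauMap, hsingle, Finset.sum_singleton]

lemma tau_sigma (x : Torus n) : tauMap (sigmaMap x) = x := by
  funext j
  have key : ∀ k : Fin n, sigmaMap x k = x k - (if h : (k:ℕ)+1 < n then x ⟨(k:ℕ)+1, h⟩ else 0) := by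
    intro k
    by_cases h : (k:ℕ)+1 < n
    · simp [sigmaMap, h]
    · simp [sigmaMap, h]
  show ∑ k ∈ Finset.Ici j, sigmaMap x k = x j
  rw [Finset.sum_congr rfl fun k _ => key k, Finset.sum_sub_distrib]
  have h2 : ∑ k ∈ Finset.Ici j, (if h : (k:ℕ)+1 < n then x ⟨(k:ℕ)+1, h⟩ else 0)
      = ∑ k ∈ Finset.Ioi j, x k := by
    rw [← Finset.sum_filter_add_sum_filter_not (Finset.Ici j) (fun k : Fin n => (k:ℕ)+1 < n)]
    have hz : ∑ k ∈ (Finset.Ici j).filter (fun k : Fin n => ¬ ((k:ℕ)+1 < n)),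
        (if h : (k:ℕ)+1 < n then x ⟨(k:ℕ)+1, h⟩ else 0) = 0 := by
      apply Finset.sum_eq_zero; intro k hk
      rw [Finset.mem_filter] at hk
      rw [dif_neg hk.2]
    rw [hz, add_zero]
    refine Finset.sum_bij' (fun k hk => ?_) (fun k hk => ?_) ?_ ?_ ?_ ?_ ?_
    · exact ⟨(k:ℕ)+1, (Finset.mem_filter.mp hk).2⟩
    · exact ⟨(k:ℕ)-1, by have := k.isLt; omega⟩
    · intro a ha
      rw [Finset.mem_filter, Finset.mem_Ici] at ha
      rw [Finset.mem_Ioi]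
      have := ha.1; rw [Fin.le_def] at this
      rw [Fin.lt_def]; simp; omega
    · intro a ha
      rw [Finset.mem_Ioi, Fin.lt_def] at ha
      rw [Finset.mem_filter, Finset.mem_Ici, Fin.le_def]
      have := a.isLt
      constructor
      · simp; omega
      · simp; omega
    · intro a ha; apply Fin.ext; simp
    · intro a ha
      rw [Finset.mem_Ioi, Fin.lt_def] at ha
      apply Fin.ext; simp; omega
    · intro a ha
      rw [dif_pos (Finset.mem_filter.mp ha).2]
  rw [h2]
  have hsplit : Finset.Ici j = insert j (Finset.Ioi j) := by
    ext k
    simp only [Finset.mem_Ici, Finset.mem_insert, Finset.mem_Ioi]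
    constructor
    · intro hk; rcases eq_or_lt_of_le hk with h1 | h1
      · left; exact h1.symm
      · right; exact h1
    · rintro (rfl | hk)
      · exact le_refl _
      · exact le_of_lt hk
  rw [hsplit, Finset.sum_insert (by simp), add_sub_cancel_right]

def dMap (β : Fin n → ℤ) : Fin n → ℤ :=
  fun j => if h : 0 < (j : ℕ) then β j - β ⟨(j:ℕ)-1, by omega⟩ else β j

lemma sum_Iic_dMap (β : Fin n → ℤ) (k : Fin n) :
    ∑ j ∈ Finset.Iic k, dMap β j = β k := by
  rcases k with ⟨m, hm⟩
  induction m with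
  | zero =>
    have : Finset.Iic (⟨0, hm⟩ : Fin n) = {⟨0, hm⟩} := by
      ext j; simp only [Finset.mem_Iic, Finset.mem_singleton, Fin.le_def]
      constructor
      · intro h; apply Fin.ext; simpa using h
      · rintro rfl; exact le_refl _
    rw [this, Finset.sum_singleton]
    simp [dMap]
  | succ m ih =>
    have hm' : m < n := by omega
    have hins : Finset.Iic (⟨m+1, hm⟩ : Fin n) = insert ⟨m+1, hm⟩ (Finset.Iic (⟨m, hm'⟩ : Fin n)) := by
      ext j
      simp only [Finset.mem_Iic, Finset.mem_insert, Fin.le_def, Fin.ext_iff]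
      omega
    have hnot : (⟨m+1, hm⟩ : Fin n) ∉ Finset.Iic (⟨m, hm'⟩ : Fin n) := by
      simp [Finset.mem_Iic, Fin.le_def]
    rw [hins, Finset.sum_insert hnot, ih hm']
    have : dMap β ⟨m+1, hm⟩ = β ⟨m+1, hm⟩ - β ⟨m, hm'⟩ := by
      simp only [dMap, dif_pos (Nat.succ_pos m)]
      congr 1
    omega

lemma tau_continuous : Continuous (tauMap (n := n)) :=
  continuous_pi fun _ => continuous_finset_sum _ fun k _ => continuous_apply k

lemma sigma_continuous : Continuous (sigmaMap (n := n)) := by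
  refine continuous_pi fun j => ?_
  by_cases h : (j : ℕ) + 1 < n
  · simp only [sigmaMap, dif_pos h]
    exact (continuous_apply j).sub (continuous_apply _)
  · simp only [sigmaMap, dif_neg h]
    exact continuous_apply j

def tauHom : Torus n →+ Torus n where
  toFun := tauMap
  map_zero' := by funext j; simp [tauMap]
  map_add' x y := by funext j; simp [tauMap, Finset.sum_add_distrib]

def sigmaHom : Torus n →+ Torus n where
  toFun := sigmaMap
  map_zero' := by
    funext j; by_cases h : (j : ℕ) + 1 < n <;> simp [sigmaMap, h]
  map_add' x y := by
    funext j
    by_cases h : (j : ℕ) + 1 < n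
    · simp only [sigmaMap, dif_pos h, Pi.add_apply]; abel
    · simp only [sigmaMap, dif_neg h, Pi.add_apply]

lemma tau_surjective : Function.Surjective (tauMap (n := n)) :=
  fun x => ⟨sigmaMap x, tau_sigma x⟩

lemma sigma_surjective : Function.Surjective (sigmaMap (n := n)) :=
  fun x => ⟨tauMap x, sigma_tau x⟩

lemma mp_tau : MeasurePreserving (tauMap (n := n)) volume volume :=
  AddMonoidHom.measurePreserving (f := tauHom (n := n)) tau_continuous tau_surjective rfl

lemma mp_sigma : MeasurePreserving (sigmaMap (n := n)) volume volume :=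
  AddMonoidHom.measurePreserving (f := sigmaHom (n := n)) sigma_continuous sigma_surjective rfl

-- jacF / jacInvF as characters
lemma jacF_eq : jacF (n := n) = char (fun j => (j.val : ℤ)) := rfl

def iotaIdx : Fin n → ℤ := fun j => if j.val = 0 then (0 : ℤ) else -1

lemma jacInvF_eq : jacInvF (n := n) = char iotaIdx := rfl

lemma jacF_continuous : Continuous (jacF (n := n)) := by
  rw [jacF_eq]; exact char_continuous _

lemma jacInvF_continuous : Continuous (jacInvF (n := n)) := by
  rw [jacInvF_eq]; exact char_continuous _

lemma jacF_norm (x : Torus n) : ‖jacF x‖ = 1 := char_norm_one _ x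

lemma jacInvF_norm (x : Torus n) : ‖jacInvF x‖ = 1 := char_norm_one _ x

def shiftIdx (α : Fin n → ℤ) : Fin n → ℤ := fun k => (∑ j ∈ Finset.Iic k, α j) + (k.val : ℤ)

lemma jac_key (α : Fin n → ℤ) (x : Torus n) :
    jacF x * char α (tauMap x) = char (shiftIdx α) x := by
  rw [jacF_eq, char_comp_tau, char_mul]
  congr 1
  funext k
  simp [shiftIdx, add_comm]

lemma iota_sum (k : Fin n) : ∑ j ∈ Finset.Iic k, iotaIdx j = -(k.val : ℤ) := by
  have hd : iotaIdx (n := n) = dMap (fun k => -(k.val : ℤ)) := by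
    funext j
    by_cases h : 0 < (j : ℕ)
    · simp only [iotaIdx, dMap, dif_pos h, if_neg (by omega : ¬ (j:ℕ) = 0)]
      have : (((j:ℕ) - 1 : ℕ) : ℤ) = (j:ℕ) - 1 := by omega
      rw [this]; ring
    · simp only [iotaIdx, dMap, dif_neg h, if_pos (by omega : (j:ℕ) = 0)]
      omega
  rw [hd, sum_Iic_dMap]

lemma jac_inv_key (x : Torus n) : jacF x * jacInvF (tauMap x) = 1 := by
  rw [jacInvF_eq, jacF_eq, char_comp_tau, char_mul]
  have : ((fun j : Fin n => (j.val : ℤ)) + fun k => ∑ j ∈ Finset.Iic k, iotaIdx j)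
      = (0 : Fin n → ℤ) := by
    funext k
    simp [iota_sum k]
  rw [this, char_zero_eq]

lemma jac_sigma_key (x : Torus n) : jacInvF x * jacF (sigmaMap x) = 1 := by
  have h := jac_inv_key (sigmaMap x)
  rw [tau_sigma] at h
  rw [mul_comm]; exact h

-- Lp machinery
lemma memLp_mulComp {J : Torus n → ℂ} (hJc : Continuous J) (hJ1 : ∀ x, ‖J x‖ = 1)
    {m : Torus n → Torus n} (hm : MeasurePreserving m volume volume) (f : L2T n) :
    MemLp (fun x => J x * f (m x)) 2 volume := by
  have ham : AEStronglyMeasurable (fun x => f (m x)) volume :=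
    (Lp.aestronglyMeasurable f).comp_measurePreserving hm
  refine ⟨hJc.aestronglyMeasurable.mul ham, ?_⟩
  have h1 : eLpNorm (fun x => J x * f (m x)) 2 volume = eLpNorm (fun x => f (m x)) 2 volume :=
    eLpNorm_congr_norm_ae (Eventually.of_forall fun x => by rw [norm_mul, hJ1, one_mul])
  have h2 : eLpNorm (fun x => f (m x)) 2 volume = eLpNorm f 2 volume :=
    eLpNorm_comp_measurePreserving (Lp.aestronglyMeasurable f) hm
  rw [h1, h2]
  exact Lp.eLpNorm_lt_top f

def mulCompL {J : Torus n → ℂ} (hJc : Continuous J) (hJ1 : ∀ x, ‖J x‖ = 1)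
    {m : Torus n → Torus n} (hm : MeasurePreserving m volume volume) :
    L2T n →ₗ[ℂ] L2T n where
  toFun f := (memLp_mulComp hJc hJ1 hm f).toLp _
  map_add' f g := by
    rw [← MemLp.toLp_add]
    apply MemLp.toLp_congr
    have h0 : (⇑(f + g) : Torus n → ℂ) =ᵐ[volume] ⇑f + ⇑g := Lp.coeFn_add f g
    have h2 := hm.quasiMeasurePreserving.ae_eq_comp h0
    filter_upwards [h2] with x hx
    simp only [Function.comp_apply, Pi.add_apply] at hx
    simp only [Pi.add_apply, hx]
    ring
  map_smul' c f := by
    simp only [RingHom.id_apply]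
    rw [← MemLp.toLp_const_smul]
    apply MemLp.toLp_congr
    have h0 : (⇑(c • f) : Torus n → ℂ) =ᵐ[volume] c • ⇑f := Lp.coeFn_smul c f
    have h2 := hm.quasiMeasurePreserving.ae_eq_comp h0
    filter_upwards [h2] with x hx
    simp only [Function.comp_apply, Pi.smul_apply, smul_eq_mul] at hx
    simp only [Pi.smul_apply, smul_eq_mul, hx]
    ring

lemma mulCompL_coeFn {J : Torus n → ℂ} (hJc : Continuous J) (hJ1 : ∀ x, ‖J x‖ = 1)
    {m : Torus n → Torus n} (hm : MeasurePreserving m volume volume) (f : L2T n) :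
    (⇑(mulCompL hJc hJ1 hm f) : Torus n → ℂ) =ᵐ[volume] fun x => J x * f (m x) :=
  MemLp.coeFn_toLp (memLp_mulComp hJc hJ1 hm f)

lemma mulCompL_norm {J : Torus n → ℂ} (hJc : Continuous J) (hJ1 : ∀ x, ‖J x‖ = 1)
    {m : Torus n → Torus n} (hm : MeasurePreserving m volume volume) (f : L2T n) :
    ‖mulCompL hJc hJ1 hm f‖ = ‖f‖ := by
  show ‖MemLp.toLp _ (memLp_mulComp hJc hJ1 hm f)‖ = ‖f‖
  rw [Lp.norm_toLp, Lp.norm_def]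
  congr 1
  have h1 : eLpNorm (fun x => J x * f (m x)) 2 (volume : Measure (Torus n))
      = eLpNorm (fun x => f (m x)) 2 volume :=
    eLpNorm_congr_norm_ae (Eventually.of_forall fun x => by rw [norm_mul, hJ1, one_mul])
  rw [h1]
  exact eLpNorm_comp_measurePreserving (Lp.aestronglyMeasurable f) hm

def PsiFwd : L2T n →ₗ[ℂ] L2T n := mulCompL jacF_continuous jacF_norm mp_tau

def PsiBwd : L2T n →ₗ[ℂ] L2T n := mulCompL jacInvF_continuous jacInvF_norm mp_sigma

lemma PsiBwd_PsiFwd (f : L2T n) : PsiBwd (PsiFwd f) = f := by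
  apply Lp.ext
  have h1 := mulCompL_coeFn jacInvF_continuous jacInvF_norm mp_sigma (PsiFwd f)
  have h2 := mp_sigma.quasiMeasurePreserving.ae_eq_comp
    (mulCompL_coeFn jacF_continuous jacF_norm mp_tau f)
  filter_upwards [h1, h2] with x hx1 hx2
  simp only [Function.comp_apply] at hx2
  have hx2' : (↑↑(PsiFwd f) : Torus n → ℂ) (sigmaMap x)
      = jacF (sigmaMap x) * (f : Torus n → ℂ) (tauMap (sigmaMap x)) := hx2
  calc ((PsiBwd (PsiFwd f) : L2T n) : Torus n → ℂ) x
      = jacInvF x * (↑↑(PsiFwd f) : Torus n → ℂ) (sigmaMap x) := hx1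
    _ = (f : Torus n → ℂ) x := by
        rw [hx2', tau_sigma, ← mul_assoc, jac_sigma_key, one_mul]

lemma PsiFwd_PsiBwd (f : L2T n) : PsiFwd (PsiBwd f) = f := by
  apply Lp.ext
  have h1 := mulCompL_coeFn jacF_continuous jacF_norm mp_tau (PsiBwd f)
  have h2 := mp_tau.quasiMeasurePreserving.ae_eq_comp
    (mulCompL_coeFn jacInvF_continuous jacInvF_norm mp_sigma f)
  filter_upwards [h1, h2] with x hx1 hx2
  simp only [Function.comp_apply] at hx2
  have hx2' : (↑↑(PsiBwd f) : Torus n → ℂ) (tauMap x)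
      = jacInvF (tauMap x) * (f : Torus n → ℂ) (sigmaMap (tauMap x)) := hx2
  calc ((PsiFwd (PsiBwd f) : L2T n) : Torus n → ℂ) x
      = jacF x * (↑↑(PsiBwd f) : Torus n → ℂ) (tauMap x) := hx1
    _ = (f : Torus n → ℂ) x := by
        rw [hx2', sigma_tau, ← mul_assoc, jac_inv_key, one_mul]

def PsiEquiv : L2T n ≃ₗᵢ[ℂ] L2T n :=
  { toLinearEquiv := LinearEquiv.ofLinear PsiFwd PsiBwd
      (LinearMap.ext fun f => PsiFwd_PsiBwd f)
      (LinearMap.ext fun f => PsiBwd_PsiFwd f),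
    norm_map' := fun f => mulCompL_norm jacF_continuous jacF_norm mp_tau f }

lemma PsiEquiv_coeFn (f : L2T n) :
    (⇑(PsiEquiv f) : Torus n → ℂ) =ᵐ[volume] fun x => jacF x * f (tauMap x) :=
  mulCompL_coeFn jacF_continuous jacF_norm mp_tau f

lemma PsiEquiv_symm_coeFn (f : L2T n) :
    (⇑(PsiEquiv.symm f) : Torus n → ℂ) =ᵐ[volume] fun x => jacInvF x * f (sigmaMap x) :=
  mulCompL_coeFn jacInvF_continuous jacInvF_norm mp_sigma f

lemma PsiEquiv_char (α : Fin n → ℤ) :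
    PsiEquiv (charL2 α) = charL2 (shiftIdx α) := by
  apply Lp.ext
  have h1 := PsiEquiv_coeFn (charL2 (n := n) α)
  have h2 := mp_tau.quasiMeasurePreserving.ae_eq_comp
    (MemLp.coeFn_toLp (char_memLp (n := n) α 2))
  have h3 := MemLp.coeFn_toLp (char_memLp (n := n) (shiftIdx α) 2)
  filter_upwards [h1, h2, h3] with x hx1 hx2 hx3
  simp only [Function.comp_apply] at hx2
  have hx2' : (↑↑(charL2 (n := n) α) : Torus n → ℂ) (tauMap x) = char α (tauMap x) := hx2
  have hx3' : (↑↑(charL2 (n := n) (shiftIdx α)) : Torus n → ℂ) x = char (shiftIdx α) x := hx3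
  calc (↑↑(PsiEquiv (charL2 α)) : Torus n → ℂ) x
      = jacF x * (↑↑(charL2 (n := n) α) : Torus n → ℂ) (tauMap x) := hx1
    _ = char (shiftIdx α) x := by rw [hx2', jac_key]
    _ = (↑↑(charL2 (n := n) (shiftIdx α)) : Torus n → ℂ) x := hx3'.symm

def unshiftIdx (β : Fin n → ℤ) : Fin n → ℤ := dMap (fun k => β k - (k.val : ℤ))

lemma shift_unshift (β : Fin n → ℤ) : shiftIdx (unshiftIdx β) = β := by
  funext k
  simp only [shiftIdx, unshiftIdx, sum_Iic_dMap]
  ring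

end Aux7

namespace Aux7
variable {n : ℕ}

lemma image_sets :
    (⇑(PsiEquiv (n := n))) ''
        (charL2 '' {α : Fin n → ℤ | ∀ k : Fin n, 0 ≤ (∑ j ∈ Finset.Iic k, α j) + (k.val : ℤ)})
      = charL2 '' {β : Fin n → ℤ | ∀ j, 0 ≤ β j} := by
  ext y
  constructor
  · rintro ⟨-, ⟨α, hα, rfl⟩, rfl⟩
    refine ⟨shiftIdx α, fun k => ?_, (PsiEquiv_char α).symm⟩
    have := hα k
    simp only [shiftIdx]
    omega
  · rintro ⟨β, hβ, rfl⟩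
    refine ⟨charL2 (unshiftIdx β), ⟨unshiftIdx β, fun k => ?_, rfl⟩, ?_⟩
    · have h1 : shiftIdx (unshiftIdx β) k = β k := by rw [shift_unshift]
      have := hβ k
      simp only [shiftIdx] at h1
      omega
    · rw [PsiEquiv_char, shift_unshift]

lemma hardy_iff (f : L2T n) : f ∈ hardyT n ↔ PsiEquiv f ∈ hardyD n := by
  set ST : Set (L2T n) :=
    charL2 '' {α : Fin n → ℤ | ∀ k : Fin n, 0 ≤ (∑ j ∈ Finset.Iic k, α j) + (k.val : ℤ)} with hST
  set SD : Set (L2T n) := charL2 '' {β : Fin n → ℤ | ∀ j, 0 ≤ β j} with hSD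
  have hset : ((Submodule.span ℂ SD : Submodule ℂ (L2T n)) : Set (L2T n))
      = ⇑PsiEquiv '' ((Submodule.span ℂ ST : Submodule ℂ (L2T n)) : Set (L2T n)) := by
    have h1 : Submodule.span ℂ SD =
        Submodule.map (PsiEquiv.toLinearEquiv.toLinearMap : L2T n →ₗ[ℂ] L2T n) (Submodule.span ℂ ST) := by
      rw [Submodule.map_span]
      congr 1
      rw [hSD, ← image_sets]
      rfl
    rw [h1, Submodule.map_coe]
    rfl
  have hcl : closure (↑(Submodule.span ℂ SD : Submodule ℂ (L2T n)) : Set (L2T n))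
      = ⇑PsiEquiv '' closure (↑(Submodule.span ℂ ST : Submodule ℂ (L2T n)) : Set (L2T n)) := by
    rw [hset]
    have := (PsiEquiv (n := n)).toHomeomorph.image_closure
      (↑(Submodule.span ℂ ST : Submodule ℂ (L2T n)) : Set (L2T n))
    exact this.symm
  constructor
  · intro hf
    have : f ∈ closure (↑(Submodule.span ℂ ST : Submodule ℂ (L2T n)) : Set (L2T n)) := by
      rw [← Submodule.topologicalClosure_coe]
      exact hf
    show PsiEquiv f ∈ hardyD n
    rw [← SetLike.mem_coe, hardyD, Submodule.topologicalClosure_coe, hcl]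
    exact Set.mem_image_of_mem _ this
  · intro hf
    rw [← SetLike.mem_coe, hardyD, Submodule.topologicalClosure_coe, hcl] at hf
    have := (PsiEquiv (n := n)).injective.mem_set_image.mp hf
    rw [← SetLike.mem_coe, hardyT, Submodule.topologicalClosure_coe]
    exact this

end Aux7


/-- The map `Ψ f = J ⬝ (f ∘ τ)` is a unitary of `L²(𝕋ⁿ)` with inverse
`f ↦ (ζ₂⋯ζₙ)⁻¹ ⬝ (f ∘ σ)`, and it maps `H²(∂_d△ₙ)` onto `H²(∂_d𝔻ⁿ)`. -/
theorem stmt7 {n : ℕ} (hn : 2 ≤ n) :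
    ∃ Ψ : L2T n ≃ₗᵢ[ℂ] L2T n,
      (∀ f : L2T n, (⇑(Ψ f) : Torus n → ℂ) =ᵐ[volume] fun x => jacF x * f (tauMap x)) ∧
      (∀ f : L2T n, (⇑(Ψ.symm f) : Torus n → ℂ) =ᵐ[volume] fun x => jacInvF x * f (sigmaMap x)) ∧
      (∀ f : L2T n, f ∈ hardyT n ↔ Ψ f ∈ hardyD n) := by
  exact ⟨Aux7.PsiEquiv, Aux7.PsiEquiv_coeFn, Aux7.PsiEquiv_symm_coeFn, Aux7.hardy_iff⟩
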